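/- arXiv:math/0509095 — 4 statements merged into one kernel-verified Lean document; each statement's English description precedes it below -/
import Mathlib

section
/- For every real number x ≥ 2, the Chebyshev function ψ and the prime counting function π satisfy ψ(x) ≤ π(x)·log(x) ≤ 2·ψ(x). -/
open Real

open Finset ArithmeticFunction in
lemma psi_eq_sum (N : ℕ) (hN : N ≠ 0) :
    ∑ n ∈ Finset.Iic N, Λ n
      = ∑ p ∈ (Finset.Iic N).filter Nat.Prime, (Nat.log p N : ℝ) * Real.log p := by
  have h1 : ∑ n ∈ Iic N, Λ n = ∑ n ∈ (Iic N).filter IsPrimePow, Λ n := by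
    rw [sum_filter_of_ne]
    intro n _ hn
    exact vonMangoldt_ne_zero_iff.mp hn
  have h2 : ∀ p ∈ (Iic N).filter Nat.Prime,
      (Nat.log p N : ℝ) * Real.log p = ∑ k ∈ Icc 1 (Nat.log p N), Λ ((p : ℕ) ^ k) := by
    intro p hp
    have hpp : p.Prime := (mem_filter.mp hp).2
    have hc : ∀ k ∈ Icc 1 (Nat.log p N), Λ ((p:ℕ) ^ k) = Real.log p := by
      intro k hk
      have hk1 := (mem_Icc.mp hk).1
      rw [vonMangoldt_apply_pow (by omega), vonMangoldt_apply_prime hpp]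
    rw [Finset.sum_congr rfl hc, Finset.sum_const, Nat.card_Icc, nsmul_eq_mul]
    simp
  rw [h1, Finset.sum_congr rfl h2, Finset.sum_sigma']
  apply Finset.sum_nbij' (i := fun n => (⟨n.minFac, n.factorization n.minFac⟩ :
      Σ _ : ℕ, ℕ)) (j := fun pk => pk.1 ^ pk.2)
  · intro n hn
    obtain ⟨hnN, hpw⟩ := mem_filter.mp hn
    have hn2 : 2 ≤ n := hpw.two_le
    have hp : n.minFac.Prime := Nat.minFac_prime (by omega)
    simp only [mem_sigma, mem_filter, mem_Iic, mem_Icc]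
    refine ⟨⟨le_trans (Nat.minFac_le (by omega)) (mem_Iic.mp hnN), hp⟩, ?_, ?_⟩
    · exact (hp.factorization_pos_of_dvd (by omega) n.minFac_dvd)
    · rw [Nat.le_log_iff_pow_le hp.one_lt hN, hpw.minFac_pow_factorization_eq]
      exact mem_Iic.mp hnN
  · intro pk hpk
    simp only [mem_sigma, mem_filter, mem_Iic, mem_Icc] at hpk
    obtain ⟨⟨hpN, hp⟩, hk1, hk2⟩ := hpk
    simp only [mem_filter, mem_Iic]
    refine ⟨(Nat.le_log_iff_pow_le hp.one_lt hN).mp hk2, hp.prime.isPrimePow.pow (by omega)⟩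
  · intro n hn
    obtain ⟨_, hpw⟩ := mem_filter.mp hn
    exact hpw.minFac_pow_factorization_eq
  · intro pk hpk
    obtain ⟨p, k⟩ := pk
    simp only [mem_sigma, mem_filter, mem_Iic, mem_Icc] at hpk
    obtain ⟨⟨hpN, hp⟩, hk1, hk2⟩ := hpk
    have h1 : (p ^ k).minFac = p := by
      rw [Nat.pow_minFac (by omega), hp.minFac_eq]
    have h2 : (p ^ k).factorization p = k := by
      rw [hp.factorization_pow, Finsupp.single_eq_same]
    simp [h1, h2, hp.factorization_self]
  · intro n hn
    obtain ⟨_, hpw⟩ := mem_filter.mp hn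
    exact congrArg (fun m => Λ m) hpw.minFac_pow_factorization_eq.symm

/-- The prime counting function for a real argument:
`primePi x` is the number of primes `p ≤ x`. -/
noncomputable def primePi (x : ℝ) : ℝ := Nat.primeCounting ⌊x⌋₊

/-- The second Chebyshev function `ψ(x) = ∑_{n ≤ x} Λ(n)`,
where `Λ` is the von Mangoldt function. -/
noncomputable def chebyshevPsi (x : ℝ) : ℝ :=
  ∑ n ∈ Finset.Iic ⌊x⌋₊, ArithmeticFunction.vonMangoldt n

lemma primeCounting_eq_card (N : ℕ) :
    Nat.primeCounting N = ((Finset.Iic N).filter Nat.Prime).card := by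
  rw [Nat.primeCounting, Nat.primeCounting', Nat.count_eq_card_filter_range]
  congr 1
  ext n
  simp [Nat.lt_succ_iff]

theorem chebyshevPsi_le_primePi_mul_log_le_two_mul (x : ℝ) (hx : 2 ≤ x) :
    chebyshevPsi x ≤ primePi x * Real.log x ∧
      primePi x * Real.log x ≤ 2 * chebyshevPsi x := by
  set N := ⌊x⌋₊ with hNdef
  have hx0 : (0:ℝ) < x := by linarith
  have hN2 : 2 ≤ N := Nat.le_floor (by exact_mod_cast hx)
  have hNx : (N : ℝ) ≤ x := Nat.floor_le hx0.le
  have hxN : x < N + 1 := Nat.lt_floor_add_one x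
  have hpsi : chebyshevPsi x
      = ∑ p ∈ (Finset.Iic N).filter Nat.Prime, (Nat.log p N : ℝ) * Real.log p := by
    rw [chebyshevPsi, ← hNdef, psi_eq_sum N (by omega)]
  have hpi : primePi x = ((Finset.Iic N).filter Nat.Prime).card := by
    rw [primePi, ← hNdef, primeCounting_eq_card]
  -- per-prime bounds
  have key : ∀ p ∈ (Finset.Iic N).filter Nat.Prime,
      (Nat.log p N : ℝ) * Real.log p ≤ Real.log x ∧
        Real.log x ≤ 2 * ((Nat.log p N : ℝ) * Real.log p) := by
    intro p hp
    obtain ⟨hpN, hpp⟩ := Finset.mem_filter.mp hp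
    rw [Finset.mem_Iic] at hpN
    have hp1 : 1 < p := hpp.one_lt
    have hm1 : 1 ≤ Nat.log p N := Nat.log_pos hp1 hpN
    set m := Nat.log p N with hm
    have hub : (p : ℝ) ^ m ≤ x := by
      have : p ^ m ≤ N := Nat.pow_log_le_self p (by omega)
      calc ((p:ℝ)) ^ m = ((p ^ m : ℕ) : ℝ) := by push_cast; ring
        _ ≤ (N : ℝ) := by exact_mod_cast this
        _ ≤ x := hNx
    have hlb : x ≤ (p : ℝ) ^ (m + 1) := by
      have : N < p ^ (m + 1) := Nat.lt_pow_succ_log_self hp1 N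
      have h2 : N + 1 ≤ p ^ (m + 1) := this
      calc x ≤ (N : ℝ) + 1 := hxN.le
        _ ≤ ((p ^ (m+1) : ℕ) : ℝ) := by exact_mod_cast h2
        _ = (p:ℝ) ^ (m+1) := by push_cast; ring
    have hlogp : 0 ≤ Real.log p := Real.log_nonneg (by exact_mod_cast hp1.le)
    constructor
    · rw [← Real.log_pow]
      exact Real.log_le_log (by positivity) hub
    · calc Real.log x ≤ Real.log ((p:ℝ) ^ (m+1)) := Real.log_le_log hx0 hlb
        _ = ((m : ℝ) + 1) * Real.log p := by rw [Real.log_pow]; push_cast; ring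
        _ ≤ 2 * ((m:ℝ) * Real.log p) := by
            have : (1:ℝ) ≤ (m:ℝ) := by exact_mod_cast hm1
            nlinarith
  constructor
  · rw [hpsi, hpi]
    calc ∑ p ∈ (Finset.Iic N).filter Nat.Prime, (Nat.log p N : ℝ) * Real.log p
        ≤ ∑ _p ∈ (Finset.Iic N).filter Nat.Prime, Real.log x :=
          Finset.sum_le_sum fun p hp => (key p hp).1
      _ = ((Finset.Iic N).filter Nat.Prime).card * Real.log x := by
          rw [Finset.sum_const, nsmul_eq_mul]
  · rw [hpsi, hpi, Finset.mul_sum]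
    calc (((Finset.Iic N).filter Nat.Prime).card : ℝ) * Real.log x
        = ∑ _p ∈ (Finset.Iic N).filter Nat.Prime, Real.log x := by
          rw [Finset.sum_const, nsmul_eq_mul]
      _ ≤ ∑ p ∈ (Finset.Iic N).filter Nat.Prime, 2 * ((Nat.log p N : ℝ) * Real.log p) :=
          Finset.sum_le_sum fun p hp => (key p hp).2
end

section
/- Let c₁ = log(2^{1/2}·3^{1/3}·5^{1/5}·30^{-1/30}) be Chebyshev's constant. For every real number x ≥ 30, the Chebyshev function satisfies ψ(x) < (6/5)·c₁·x + (5/(4·log 6))·(log x)² + (5/4)·log(x) + 1. -/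
open Real

/-- Chebyshev's constant `c₁ = log(2^{1/2}·3^{1/3}·5^{1/5}·30^{-1/30})`. -/
noncomputable def chebyshevC₁ : ℝ :=
  Real.log ((2 : ℝ) ^ ((1 : ℝ)/2) * (3 : ℝ) ^ ((1 : ℝ)/3) *
    (5 : ℝ) ^ ((1 : ℝ)/5) * (30 : ℝ) ^ (-(1 : ℝ)/30))

/-- Chebyshev's constant `c₂ = (6/5)·c₁`. -/
noncomputable def chebyshevC₂ : ℝ := (6/5) * chebyshevC₁

open Finset ArithmeticFunction intervalIntegral




noncomputable def T (N : ℕ) : ℝ := ∑ n ∈ Finset.Ioc 0 N, Real.log n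
noncomputable def P (N : ℕ) : ℝ := ∑ n ∈ Finset.Ioc 0 N, Λ n

lemma divisors_eq {n N : ℕ} (hn : n ∈ Finset.Ioc 0 N) :
    n.divisors = (Finset.Ioc 0 N).filter (· ∣ n) := by
  simp only [Finset.mem_Ioc] at hn
  ext d
  simp only [Nat.mem_divisors, Finset.mem_filter, Finset.mem_Ioc]
  constructor
  · rintro ⟨hd, h0⟩
    exact ⟨⟨Nat.pos_of_dvd_of_pos hd hn.1, le_trans (Nat.le_of_dvd hn.1 hd) hn.2⟩, hd⟩
  · rintro ⟨_, hd⟩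
    exact ⟨hd, hn.1.ne'⟩

lemma T_eq (N : ℕ) : T N = ∑ d ∈ Finset.Ioc 0 N, Λ d * (N / d : ℕ) := by
  unfold T
  have : ∀ n ∈ Finset.Ioc 0 N, Real.log n = ∑ d ∈ (Finset.Ioc 0 N).filter (· ∣ n), Λ d := by
    intro n hn
    rw [← divisors_eq hn, ArithmeticFunction.vonMangoldt_sum]
  rw [Finset.sum_congr rfl this]
  simp only [Finset.sum_filter]
  rw [Finset.sum_comm]
  refine Finset.sum_congr rfl fun d hd => ?_
  rw [← Finset.sum_filter, Finset.sum_const, ← Nat.Ioc_filter_dvd_card_eq_div N d]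
  simp [mul_comm, Finset.filter_congr (fun x _ => by rw [dvd_comm] : ∀ x ∈ Finset.Ioc 0 N, (d ∣ x) = (d ∣ x))]





noncomputable def E (N : ℕ) : ℝ := T N - T (N/2) - T (N/3) - T (N/5) + T (N/30)

def Fz (m : ℕ) : ℤ := (m : ℤ) - (m/2 : ℕ) - (m/3 : ℕ) - (m/5 : ℕ) + (m/30 : ℕ)

lemma Fz_nonneg (m : ℕ) : 0 ≤ Fz m := by unfold Fz; omega

lemma Fz_le_one (m : ℕ) : Fz m ≤ 1 := by unfold Fz; omega

lemma Fz_eq_one {m : ℕ} (h1 : 1 ≤ m) (h5 : m ≤ 5) : Fz m = 1 := by unfold Fz; omega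

lemma T_div_eq (N c : ℕ) (hc : 0 < c) :
    T (N / c) = ∑ d ∈ Finset.Ioc 0 N, Λ d * ((N / d) / c : ℕ) := by
  rw [T_eq]
  refine Finset.sum_subset (Finset.Ioc_subset_Ioc_right (Nat.div_le_self N c)) ?_ |>.trans
    (Finset.sum_congr rfl fun d hd => ?_)
  · intro d hd hnd
    simp only [Finset.mem_Ioc, not_and, not_le] at hd hnd
    rw [Nat.div_eq_of_lt (hnd hd.1), Nat.cast_zero, mul_zero]
  · rw [Nat.div_div_eq_div_mul, Nat.div_div_eq_div_mul, mul_comm d c]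

lemma E_eq (N : ℕ) : E N = ∑ d ∈ Finset.Ioc 0 N, Λ d * (Fz (N / d) : ℝ) := by
  unfold E
  rw [T_eq, T_div_eq N 2 (by norm_num), T_div_eq N 3 (by norm_num),
    T_div_eq N 5 (by norm_num), T_div_eq N 30 (by norm_num)]
  rw [← Finset.sum_sub_distrib, ← Finset.sum_sub_distrib, ← Finset.sum_sub_distrib,
    ← Finset.sum_add_distrib]
  refine Finset.sum_congr rfl fun d hd => ?_
  have : ((Fz (N / d) : ℤ) : ℝ) = ((N/d : ℕ) : ℝ) - ((N/d/2 : ℕ) : ℝ) - ((N/d/3 : ℕ) : ℝ)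
      - ((N/d/5 : ℕ) : ℝ) + ((N/d/30 : ℕ) : ℝ) := by
    unfold Fz
    simp only [Int.cast_add, Int.cast_sub, Int.cast_natCast]
  rw [this]
  ring

lemma psi_sub_le_E (N : ℕ) : P N - P (N / 6) ≤ E N := by
  have hsplit : P (N / 6) + ∑ n ∈ Finset.Ioc (N/6) N, Λ n = P N := by
    unfold P
    exact Finset.sum_Ioc_consecutive _ (Nat.zero_le _) (Nat.div_le_self N 6)
  have h1 : P N - P (N / 6) = ∑ n ∈ Finset.Ioc (N/6) N, Λ n := by linarith
  rw [h1, E_eq]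
  have hsub : Finset.Ioc (N/6) N ⊆ Finset.Ioc 0 N :=
    Finset.Ioc_subset_Ioc_left (Nat.zero_le _)
  calc ∑ n ∈ Finset.Ioc (N/6) N, Λ n
      ≤ ∑ d ∈ Finset.Ioc (N/6) N, Λ d * (Fz (N / d) : ℝ) := by
        refine Finset.sum_le_sum fun d hd => ?_
        simp only [Finset.mem_Ioc] at hd
        have h6 : N < 6 * d := by omega
        have hlt : N / d < 6 := (Nat.div_lt_iff_lt_mul (by omega)).2 (by omega)
        have hge : 1 ≤ N / d := (Nat.one_le_div_iff (by omega)).2 hd.2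
        rw [Fz_eq_one hge (by omega)]
        simp
    _ ≤ ∑ d ∈ Finset.Ioc 0 N, Λ d * (Fz (N / d) : ℝ) := by
        refine Finset.sum_le_sum_of_subset_of_nonneg hsub fun d _ _ => ?_
        exact mul_nonneg ArithmeticFunction.vonMangoldt_nonneg
          (by exact_mod_cast Fz_nonneg (N / d))





noncomputable def g (y : ℝ) : ℝ := y * Real.log y - y

lemma integral_log_eq_g {a b : ℝ} (ha : 0 < a) (hb : 0 < b) :
    ∫ t in a..b, Real.log t = g b - g a := by
  rw [integral_log]; unfold g; ring

lemma integrable_log' {a b : ℝ} (ha : 0 < a) (hb : 0 < b) :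
    IntervalIntegrable Real.log MeasureTheory.volume a b :=
  intervalIntegrable_log (Set.notMem_uIcc_of_lt ha hb)

lemma integrable_affine (c d a b : ℝ) :
    IntervalIntegrable (fun t => c + d * t) MeasureTheory.volume a b :=
  Continuous.intervalIntegrable (by continuity) a b

lemma integral_affine (c d a b : ℝ) :
    ∫ t in a..b, (c + d * t) = c * (b - a) + d * (b^2 - a^2) / 2 := by
  rw [intervalIntegral.integral_add (Continuous.intervalIntegrable (by continuity) a b)
      (Continuous.intervalIntegrable (by continuity) a b),
    intervalIntegral.integral_const, intervalIntegral.integral_const_mul, integral_id,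
    smul_eq_mul]
  ring

/-- chord below: `(log n + log (n+1))/2 ≤ ∫_n^{n+1} log`. -/
lemma chord_le (n : ℝ) (hn : 1 ≤ n) :
    (Real.log n + Real.log (n+1)) / 2 ≤ ∫ t in n..(n+1), Real.log t := by
  have h0 : (0:ℝ) < n := by linarith
  have key : ∀ t ∈ Set.Icc n (n+1),
      ((n+1) * Real.log n - n * Real.log (n+1)) + (Real.log (n+1) - Real.log n) * t
        ≤ Real.log t := by
    intro t ht
    obtain ⟨ht1, ht2⟩ := ht
    have hcc := strictConcaveOn_log_Ioi.concaveOn.2 (Set.mem_Ioi.2 h0)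
      (Set.mem_Ioi.2 (by linarith : (0:ℝ) < n+1)) (by linarith : (0:ℝ) ≤ n+1-t)
      (by linarith : (0:ℝ) ≤ t-n) (by ring)
    have harg : (n+1-t) • n + (t-n) • (n+1) = t := by simp only [smul_eq_mul]; ring
    rw [harg] at hcc
    simp only [smul_eq_mul] at hcc
    nlinarith [hcc]
  have hmono : (∫ t in n..(n+1), (((n+1) * Real.log n - n * Real.log (n+1))
      + (Real.log (n+1) - Real.log n) * t))
      ≤ ∫ t in n..(n+1), Real.log t :=
    intervalIntegral.integral_mono_on (by linarith)
      (integrable_affine _ _ _ _) (integrable_log' h0 (by linarith)) key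
  rw [integral_affine] at hmono
  nlinarith [hmono]

/-- midpoint above: `∫_{n-1/2}^{n+1/2} log ≤ log n`. -/
lemma midpoint_ge (n : ℝ) (hn : 1 ≤ n) :
    (∫ t in (n - 1/2)..(n + 1/2), Real.log t) ≤ Real.log n := by
  have h0 : (0:ℝ) < n := by linarith
  have key : ∀ t ∈ Set.Icc (n - 1/2) (n + 1/2),
      Real.log t ≤ (Real.log n - 1) + (1/n) * t := by
    intro t ht
    obtain ⟨ht1, ht2⟩ := ht
    have htpos : 0 < t := by linarith
    have h1 : Real.log t - Real.log n = Real.log (t / n) := by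
      rw [Real.log_div htpos.ne' h0.ne']
    have h2 : Real.log (t / n) ≤ t / n - 1 :=
      Real.log_le_sub_one_of_pos (by positivity)
    have h3 : t / n = (1/n) * t := by field_simp
    linarith [h1, h2, h3]
  have hmono : (∫ t in (n - 1/2)..(n + 1/2), Real.log t)
      ≤ ∫ t in (n - 1/2)..(n + 1/2), ((Real.log n - 1) + (1/n) * t) :=
    intervalIntegral.integral_mono_on (by linarith)
      (integrable_log' (by linarith) (by linarith)) (integrable_affine _ _ _ _) key
  rw [integral_affine] at hmono
  have hne : n ≠ 0 := h0.ne'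
  have : (Real.log n - 1) * (n + 1/2 - (n - 1/2)) + (1/n) * ((n+1/2)^2 - (n-1/2)^2) / 2
      = Real.log n := by field_simp; ring
  linarith [this ▸ hmono]



lemma T_zero : T 0 = 0 := by simp [T]

lemma T_succ (M : ℕ) : T (M + 1) = T M + Real.log (M + 1) := by
  unfold T
  rw [Finset.sum_Ioc_succ_top (Nat.zero_le _)]
  push_cast
  ring

lemma g_zero : g 0 = 0 := by simp [g]

lemma g_one : g 1 = -1 := by simp [g]

lemma T_le (M : ℕ) : T M ≤ g M + 1 + Real.log M / 2 := by
  induction M with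
  | zero => simp [T_zero, g_zero]
  | succ M ih =>
    rcases Nat.eq_zero_or_pos M with rfl | hM
    · simp [T_succ, T_zero, g_one]
    have hM1 : (1:ℝ) ≤ (M:ℝ) := by exact_mod_cast hM
    have hchord := chord_le M hM1
    rw [integral_log_eq_g (by linarith) (by linarith)] at hchord
    rw [T_succ]
    push_cast
    linarith [ih]

lemma le_T_aux (M : ℕ) (hM : 1 ≤ M) : g ((M:ℝ) + 1/2) - g (3/2) ≤ T M := by
  induction M with
  | zero => omega
  | succ M ih =>
    rcases Nat.eq_zero_or_pos M with rfl | hM0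
    · have : T 1 = 0 := by simp [T_succ, T_zero]
      rw [this]
      norm_num
    have hM1 : (1:ℝ) ≤ (M:ℝ) := by exact_mod_cast hM0
    have hmid := midpoint_ge ((M:ℝ) + 1) (by linarith)
    have heq : ((M:ℝ) + 1 - 1/2) = (M:ℝ) + 1/2 := by ring
    have heq2 : ((M:ℝ) + 1 + 1/2) = (M:ℝ) + 3/2 := by ring
    rw [heq, heq2, integral_log_eq_g (by linarith) (by linarith)] at hmid
    rw [T_succ]
    push_cast
    rw [show ((M:ℝ) + 1 + 1/2) = (M:ℝ) + 3/2 by ring]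
    have := ih hM0
    linarith

lemma le_T (M : ℕ) : g M + Real.log M / 2 ≤ T M := by
  rcases Nat.eq_zero_or_pos M with rfl | hM
  · simp [T_zero, g_zero]
  have hM1 : (1:ℝ) ≤ (M:ℝ) := by exact_mod_cast hM
  have h32 : g (3/2) ≤ 0 := by
    have : Real.log (3/2) ≤ 3/2 - 1 := Real.log_le_sub_one_of_pos (by norm_num)
    unfold g; nlinarith
  have hseg : Real.log M / 2 ≤ g ((M:ℝ) + 1/2) - g (M:ℝ) := by
    have hint : (∫ t in (M:ℝ)..((M:ℝ) + 1/2), Real.log (M:ℝ))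
        ≤ ∫ t in (M:ℝ)..((M:ℝ) + 1/2), Real.log t := by
      apply intervalIntegral.integral_mono_on (by linarith)
        (intervalIntegrable_const) (integrable_log' (by linarith) (by linarith))
      intro t ht
      exact Real.log_le_log (by linarith) ht.1
    rw [intervalIntegral.integral_const, integral_log_eq_g (by linarith) (by linarith),
      smul_eq_mul] at hint
    linarith
  linarith [le_T_aux M hM]

noncomputable def c1 : ℝ := (1/2) * Real.log 2 + (1/3) * Real.log 3 + (1/5) * Real.log 5
  - (1/30) * (Real.log 2 + Real.log 3 + Real.log 5)

lemma log30 : Real.log 30 = Real.log 2 + Real.log 3 + Real.log 5 := by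
  rw [show (30:ℝ) = 2 * (3 * 5) by norm_num, Real.log_mul (by norm_num) (by norm_num),
    Real.log_mul (by norm_num) (by norm_num)]
  ring

lemma g_mono {a b : ℝ} (ha : 1 ≤ a) (hab : a ≤ b) : g a ≤ g b := by
  have h : g b - g a = ∫ t in a..b, Real.log t :=
    (integral_log_eq_g (by linarith) (by linarith)).symm
  have h2 : (0:ℝ) ≤ ∫ t in a..b, Real.log t := by
    apply intervalIntegral.integral_nonneg hab
    intro t ht
    exact Real.log_nonneg (le_trans ha ht.1)
  linarith

lemma g_sub_le {a b : ℝ} (ha : 1 ≤ a) (hab : a ≤ b) (hba : b ≤ a + 1) :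
    g b - g a ≤ Real.log b := by
  have h : g b - g a = ∫ t in a..b, Real.log t :=
    (integral_log_eq_g (by linarith) (by linarith)).symm
  have h2 : (∫ t in a..b, Real.log t) ≤ ∫ _t in a..b, Real.log b := by
    apply intervalIntegral.integral_mono_on hab
      (integrable_log' (by linarith) (by linarith)) intervalIntegrable_const
    intro t ht
    exact Real.log_le_log (by linarith [ht.1]) ht.2
  rw [intervalIntegral.integral_const, smul_eq_mul] at h2
  have hlogb : 0 ≤ Real.log b := Real.log_nonneg (by linarith)
  nlinarith

lemma g_combo (x : ℝ) (hx : 0 < x) :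
    g x - g (x/2) - g (x/3) - g (x/5) + g (x/30) = c1 * x := by
  unfold g c1
  rw [Real.log_div hx.ne' (by norm_num), Real.log_div hx.ne' (by norm_num),
    Real.log_div hx.ne' (by norm_num), Real.log_div hx.ne' (by norm_num), log30]
  ring


lemma div_cast_bounds (N m : ℕ) (hm : 0 < m) :
    (N:ℝ)/m - 1 < ((N/m : ℕ):ℝ) ∧ ((N/m : ℕ):ℝ) ≤ (N:ℝ)/m := by
  have h1 : N / m * m ≤ N := Nat.div_mul_le_self N m
  have h2 : N < N / m * m + m := by
    conv_lhs => rw [← Nat.div_add_mod N m]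
    rw [mul_comm]
    exact Nat.add_lt_add_left (Nat.mod_lt N hm) _
  have hm' : (0:ℝ) < m := by exact_mod_cast hm
  have h1' : ((N/m : ℕ):ℝ) * m ≤ N := by exact_mod_cast h1
  have h2' : (N:ℝ) < ((N/m : ℕ):ℝ) * m + m := by exact_mod_cast h2
  constructor
  · rw [sub_lt_iff_lt_add, div_lt_iff₀ hm']
    linarith
  · rw [le_div_iff₀ hm']
    exact h1'

set_option maxHeartbeats 1000000 in
lemma E_le (N : ℕ) (hN : 30 ≤ N) :
    E N ≤ c1 * N + (5/2) * Real.log N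
      + (2 + (1/2) * (Real.log (15/14) + Real.log (10/9) + Real.log (6/5))
         - (Real.log 2 + Real.log 3 + Real.log 5)) := by
  have hx : (30:ℝ) ≤ (N:ℝ) := by exact_mod_cast hN
  set x := (N:ℝ) with hxdef
  have hx0 : (0:ℝ) < x := by linarith
  obtain ⟨h2l, h2u⟩ := div_cast_bounds N 2 (by norm_num)
  obtain ⟨h3l, h3u⟩ := div_cast_bounds N 3 (by norm_num)
  obtain ⟨h5l, h5u⟩ := div_cast_bounds N 5 (by norm_num)
  obtain ⟨h30l, h30u⟩ := div_cast_bounds N 30 (by norm_num)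
  set a2 := ((N/2 : ℕ):ℝ)
  set a3 := ((N/3 : ℕ):ℝ)
  set a5 := ((N/5 : ℕ):ℝ)
  set a30 := ((N/30 : ℕ):ℝ)
  have ha2 : (14:ℝ) ≤ a2 := by push_cast at h2l ⊢; linarith
  have ha3 : (9:ℝ) ≤ a3 := by push_cast at h3l ⊢; linarith
  have ha5 : (5:ℝ) ≤ a5 := by push_cast at h5l ⊢; linarith
  have ha30 : (1:ℝ) ≤ a30 := by
    have h : (1:ℕ) ≤ N/30 := by omega
    show (1:ℝ) ≤ ((N/30 : ℕ):ℝ)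
    exact_mod_cast h
  -- T bounds
  have hTN : T N ≤ g x + 1 + Real.log x / 2 := T_le N
  have hT2 : g a2 + Real.log a2 / 2 ≤ T (N/2) := le_T (N/2)
  have hT3 : g a3 + Real.log a3 / 2 ≤ T (N/3) := le_T (N/3)
  have hT5 : g a5 + Real.log a5 / 2 ≤ T (N/5) := le_T (N/5)
  have hT30 : T (N/30) ≤ g a30 + 1 + Real.log a30 / 2 := T_le (N/30)
  -- g floor corrections
  have hg2 : g (x/2) - g a2 ≤ Real.log (x/2) := g_sub_le (by linarith) h2u (by push_cast at h2l ⊢; linarith)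
  have hg3 : g (x/3) - g a3 ≤ Real.log (x/3) := g_sub_le (by linarith) h3u (by push_cast at h3l ⊢; linarith)
  have hg5 : g (x/5) - g a5 ≤ Real.log (x/5) := g_sub_le (by linarith) h5u (by push_cast at h5l ⊢; linarith)
  have hg30 : g a30 ≤ g (x/30) := g_mono ha30 h30u
  -- log floor corrections
  have hl2 : Real.log (x/2) + Real.log (14/15) ≤ Real.log a2 := by
    rw [← Real.log_mul (by positivity) (by norm_num)]
    exact Real.log_le_log (by positivity) (by linarith)
  have hl3 : Real.log (x/3) + Real.log (9/10) ≤ Real.log a3 := by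
    rw [← Real.log_mul (by positivity) (by norm_num)]
    exact Real.log_le_log (by positivity) (by linarith)
  have hl5 : Real.log (x/5) + Real.log (5/6) ≤ Real.log a5 := by
    rw [← Real.log_mul (by positivity) (by norm_num)]
    exact Real.log_le_log (by positivity) (by linarith)
  have hl30 : Real.log a30 ≤ Real.log (x/30) := Real.log_le_log (by linarith) h30u
  -- combine
  have hcombo := g_combo x hx0
  have hlog2 : Real.log (x/2) = Real.log x - Real.log 2 := Real.log_div hx0.ne' (by norm_num)
  have hlog3 : Real.log (x/3) = Real.log x - Real.log 3 := Real.log_div hx0.ne' (by norm_num)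
  have hlog5 : Real.log (x/5) = Real.log x - Real.log 5 := Real.log_div hx0.ne' (by norm_num)
  have hlog30 : Real.log (x/30) = Real.log x - Real.log 30 := Real.log_div hx0.ne' (by norm_num)
  have hinv2 : Real.log (14/15) = - Real.log (15/14) := by
    rw [← Real.log_inv]; norm_num
  have hinv3 : Real.log (9/10) = - Real.log (10/9) := by
    rw [← Real.log_inv]; norm_num
  have hinv5 : Real.log (5/6) = - Real.log (6/5) := by
    rw [← Real.log_inv]; norm_num
  unfold E
  rw [hinv2] at hl2
  rw [hinv3] at hl3
  rw [hinv5] at hl5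
  rw [hlog2] at hg2 hl2
  rw [hlog3] at hg3 hl3
  rw [hlog5] at hg5 hl5
  rw [hlog30, log30] at hl30
  linarith

lemma P_zero : P 0 = 0 := by simp [P]

lemma P_succ (M : ℕ) : P (M + 1) = P M + Λ (M + 1) := by
  unfold P
  rw [Finset.sum_Ioc_succ_top (Nat.zero_le _)]

lemma P_mono {M N : ℕ} (h : M ≤ N) : P M ≤ P N :=
  Finset.sum_le_sum_of_subset_of_nonneg (Finset.Ioc_subset_Ioc_right h)
    (fun i _ _ => ArithmeticFunction.vonMangoldt_nonneg)

lemma log_two_lb : (0.6931471803:ℝ) ≤ Real.log 2 := le_of_lt Real.log_two_gt_d9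
lemma log_two_ub : Real.log 2 ≤ (0.6931471808:ℝ) := le_of_lt Real.log_two_lt_d9


lemma log3_lb : 1 * Real.log 2 + (1 - 2/3 : ℝ) ≤ Real.log 3 := by
  have hd : Real.log (2:ℝ) = 1 * Real.log 2 := by
    rw [show (2:ℝ) = 2^(1:ℕ) by norm_num, Real.log_pow]
    norm_num
  have hs : Real.log ((2:ℝ)/3) = Real.log (2:ℝ) - Real.log (3:ℝ) :=
    Real.log_div (by norm_num) (by norm_num)
  have h2 : Real.log ((2:ℝ)/3) ≤ (2:ℝ)/3 - 1 :=
    Real.log_le_sub_one_of_pos (by norm_num)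
  linarith

lemma log5_lb : 2 * Real.log 2 + (1 - 4/5 : ℝ) ≤ Real.log 5 := by
  have hd : Real.log (4:ℝ) = 2 * Real.log 2 := by
    rw [show (4:ℝ) = 2^(2:ℕ) by norm_num, Real.log_pow]
    norm_num
  have hs : Real.log ((4:ℝ)/5) = Real.log (4:ℝ) - Real.log (5:ℝ) :=
    Real.log_div (by norm_num) (by norm_num)
  have h2 : Real.log ((4:ℝ)/5) ≤ (4:ℝ)/5 - 1 :=
    Real.log_le_sub_one_of_pos (by norm_num)
  linarith

lemma log3_ub : Real.log 3 ≤ 1 * Real.log 2 + (3/2 - 1 : ℝ) := by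
  have hd : Real.log (2:ℝ) = 1 * Real.log 2 := by
    rw [show (2:ℝ) = 2^(1:ℕ) by norm_num, Real.log_pow]
    norm_num
  have hs : Real.log ((3:ℝ)/2) = Real.log (3:ℝ) - Real.log (2:ℝ) :=
    Real.log_div (by norm_num) (by norm_num)
  have h2 : Real.log ((3:ℝ)/2) ≤ (3:ℝ)/2 - 1 :=
    Real.log_le_sub_one_of_pos (by norm_num)
  linarith

lemma log5_ub : Real.log 5 ≤ 2 * Real.log 2 + (5/4 - 1 : ℝ) := by
  have hd : Real.log (4:ℝ) = 2 * Real.log 2 := by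
    rw [show (4:ℝ) = 2^(2:ℕ) by norm_num, Real.log_pow]
    norm_num
  have hs : Real.log ((5:ℝ)/4) = Real.log (5:ℝ) - Real.log (4:ℝ) :=
    Real.log_div (by norm_num) (by norm_num)
  have h2 : Real.log ((5:ℝ)/4) ≤ (5:ℝ)/4 - 1 :=
    Real.log_le_sub_one_of_pos (by norm_num)
  linarith

lemma log7_ub : Real.log 7 ≤ 2 * Real.log 2 + (7/4 - 1 : ℝ) := by
  have hd : Real.log (4:ℝ) = 2 * Real.log 2 := by
    rw [show (4:ℝ) = 2^(2:ℕ) by norm_num, Real.log_pow]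
    norm_num
  have hs : Real.log ((7:ℝ)/4) = Real.log (7:ℝ) - Real.log (4:ℝ) :=
    Real.log_div (by norm_num) (by norm_num)
  have h2 : Real.log ((7:ℝ)/4) ≤ (7:ℝ)/4 - 1 :=
    Real.log_le_sub_one_of_pos (by norm_num)
  linarith

lemma log11_ub : Real.log 11 ≤ 3 * Real.log 2 + (11/8 - 1 : ℝ) := by
  have hd : Real.log (8:ℝ) = 3 * Real.log 2 := by
    rw [show (8:ℝ) = 2^(3:ℕ) by norm_num, Real.log_pow]
    norm_num
  have hs : Real.log ((11:ℝ)/8) = Real.log (11:ℝ) - Real.log (8:ℝ) :=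
    Real.log_div (by norm_num) (by norm_num)
  have h2 : Real.log ((11:ℝ)/8) ≤ (11:ℝ)/8 - 1 :=
    Real.log_le_sub_one_of_pos (by norm_num)
  linarith

lemma log13_ub : Real.log 13 ≤ 3 * Real.log 2 + (13/8 - 1 : ℝ) := by
  have hd : Real.log (8:ℝ) = 3 * Real.log 2 := by
    rw [show (8:ℝ) = 2^(3:ℕ) by norm_num, Real.log_pow]
    norm_num
  have hs : Real.log ((13:ℝ)/8) = Real.log (13:ℝ) - Real.log (8:ℝ) :=
    Real.log_div (by norm_num) (by norm_num)
  have h2 : Real.log ((13:ℝ)/8) ≤ (13:ℝ)/8 - 1 :=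
    Real.log_le_sub_one_of_pos (by norm_num)
  linarith

lemma log17_ub : Real.log 17 ≤ 4 * Real.log 2 + (17/16 - 1 : ℝ) := by
  have hd : Real.log (16:ℝ) = 4 * Real.log 2 := by
    rw [show (16:ℝ) = 2^(4:ℕ) by norm_num, Real.log_pow]
    norm_num
  have hs : Real.log ((17:ℝ)/16) = Real.log (17:ℝ) - Real.log (16:ℝ) :=
    Real.log_div (by norm_num) (by norm_num)
  have h2 : Real.log ((17:ℝ)/16) ≤ (17:ℝ)/16 - 1 :=
    Real.log_le_sub_one_of_pos (by norm_num)
  linarith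

lemma log19_ub : Real.log 19 ≤ 4 * Real.log 2 + (19/16 - 1 : ℝ) := by
  have hd : Real.log (16:ℝ) = 4 * Real.log 2 := by
    rw [show (16:ℝ) = 2^(4:ℕ) by norm_num, Real.log_pow]
    norm_num
  have hs : Real.log ((19:ℝ)/16) = Real.log (19:ℝ) - Real.log (16:ℝ) :=
    Real.log_div (by norm_num) (by norm_num)
  have h2 : Real.log ((19:ℝ)/16) ≤ (19:ℝ)/16 - 1 :=
    Real.log_le_sub_one_of_pos (by norm_num)
  linarith

lemma log23_ub : Real.log 23 ≤ 4 * Real.log 2 + (23/16 - 1 : ℝ) := by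
  have hd : Real.log (16:ℝ) = 4 * Real.log 2 := by
    rw [show (16:ℝ) = 2^(4:ℕ) by norm_num, Real.log_pow]
    norm_num
  have hs : Real.log ((23:ℝ)/16) = Real.log (23:ℝ) - Real.log (16:ℝ) :=
    Real.log_div (by norm_num) (by norm_num)
  have h2 : Real.log ((23:ℝ)/16) ≤ (23:ℝ)/16 - 1 :=
    Real.log_le_sub_one_of_pos (by norm_num)
  linarith

lemma log29_ub : Real.log 29 ≤ 4 * Real.log 2 + (29/16 - 1 : ℝ) := by
  have hd : Real.log (16:ℝ) = 4 * Real.log 2 := by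
    rw [show (16:ℝ) = 2^(4:ℕ) by norm_num, Real.log_pow]
    norm_num
  have hs : Real.log ((29:ℝ)/16) = Real.log (29:ℝ) - Real.log (16:ℝ) :=
    Real.log_div (by norm_num) (by norm_num)
  have h2 : Real.log ((29:ℝ)/16) ≤ (29:ℝ)/16 - 1 :=
    Real.log_le_sub_one_of_pos (by norm_num)
  linarith

lemma Lam1 : Λ 1 = 0 := by
  rw [ArithmeticFunction.vonMangoldt_apply]
  norm_num
  all_goals decide

lemma Lam2 : Λ 2 = Real.log 2 := by
  rw [ArithmeticFunction.vonMangoldt_apply]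
  norm_num [Nat.minFac]
  all_goals decide

lemma Lam3 : Λ 3 = Real.log 3 := by
  rw [ArithmeticFunction.vonMangoldt_apply]
  norm_num [Nat.minFac]
  all_goals decide +kernel

lemma Lam4 : Λ 4 = Real.log 2 := by
  rw [ArithmeticFunction.vonMangoldt_apply]
  norm_num [Nat.minFac]
  all_goals decide

lemma Lam5 : Λ 5 = Real.log 5 := by
  rw [ArithmeticFunction.vonMangoldt_apply]
  norm_num [Nat.minFac]
  all_goals decide +kernel

lemma Lam6 : Λ 6 = 0 := by
  rw [ArithmeticFunction.vonMangoldt_apply]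
  norm_num
  all_goals decide

lemma Lam7 : Λ 7 = Real.log 7 := by
  rw [ArithmeticFunction.vonMangoldt_apply]
  norm_num [Nat.minFac]
  all_goals decide +kernel

lemma Lam8 : Λ 8 = Real.log 2 := by
  rw [ArithmeticFunction.vonMangoldt_apply]
  norm_num [Nat.minFac]
  all_goals decide

lemma Lam9 : Λ 9 = Real.log 3 := by
  rw [ArithmeticFunction.vonMangoldt_apply]
  norm_num [Nat.minFac]
  all_goals decide +kernel

lemma Lam10 : Λ 10 = 0 := by
  rw [ArithmeticFunction.vonMangoldt_apply]
  norm_num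
  all_goals decide

lemma Lam11 : Λ 11 = Real.log 11 := by
  rw [ArithmeticFunction.vonMangoldt_apply]
  norm_num [Nat.minFac]
  all_goals decide +kernel

lemma Lam12 : Λ 12 = 0 := by
  rw [ArithmeticFunction.vonMangoldt_apply]
  norm_num
  all_goals decide

lemma Lam13 : Λ 13 = Real.log 13 := by
  rw [ArithmeticFunction.vonMangoldt_apply]
  norm_num [Nat.minFac]
  all_goals decide +kernel

lemma Lam14 : Λ 14 = 0 := by
  rw [ArithmeticFunction.vonMangoldt_apply]
  norm_num
  all_goals decide

lemma Lam15 : Λ 15 = 0 := by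
  rw [ArithmeticFunction.vonMangoldt_apply]
  norm_num
  all_goals decide +kernel

lemma Lam16 : Λ 16 = Real.log 2 := by
  rw [ArithmeticFunction.vonMangoldt_apply]
  norm_num [Nat.minFac]
  all_goals decide

lemma Lam17 : Λ 17 = Real.log 17 := by
  rw [ArithmeticFunction.vonMangoldt_apply]
  norm_num [Nat.minFac]
  all_goals decide +kernel

lemma Lam18 : Λ 18 = 0 := by
  rw [ArithmeticFunction.vonMangoldt_apply]
  norm_num
  all_goals decide

lemma Lam19 : Λ 19 = Real.log 19 := by
  rw [ArithmeticFunction.vonMangoldt_apply]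
  norm_num [Nat.minFac]
  all_goals decide +kernel

lemma Lam20 : Λ 20 = 0 := by
  rw [ArithmeticFunction.vonMangoldt_apply]
  norm_num
  all_goals decide

lemma Lam21 : Λ 21 = 0 := by
  rw [ArithmeticFunction.vonMangoldt_apply]
  norm_num
  all_goals decide +kernel

lemma Lam22 : Λ 22 = 0 := by
  rw [ArithmeticFunction.vonMangoldt_apply]
  norm_num
  all_goals decide

lemma Lam23 : Λ 23 = Real.log 23 := by
  rw [ArithmeticFunction.vonMangoldt_apply]
  norm_num [Nat.minFac]
  all_goals decide +kernel

lemma Lam24 : Λ 24 = 0 := by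
  rw [ArithmeticFunction.vonMangoldt_apply]
  norm_num
  all_goals decide

lemma Lam25 : Λ 25 = Real.log 5 := by
  rw [ArithmeticFunction.vonMangoldt_apply]
  norm_num [Nat.minFac]
  all_goals decide +kernel

lemma Lam26 : Λ 26 = 0 := by
  rw [ArithmeticFunction.vonMangoldt_apply]
  norm_num
  all_goals decide

lemma Lam27 : Λ 27 = Real.log 3 := by
  rw [ArithmeticFunction.vonMangoldt_apply]
  norm_num [Nat.minFac]
  all_goals decide +kernel

lemma Lam28 : Λ 28 = 0 := by
  rw [ArithmeticFunction.vonMangoldt_apply]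
  norm_num
  all_goals decide

lemma Lam29 : Λ 29 = Real.log 29 := by
  rw [ArithmeticFunction.vonMangoldt_apply]
  norm_num [Nat.minFac]
  all_goals decide +kernel

lemma P_squeeze {N a b : ℕ} (ha : a ≤ N) (hb : N ≤ b) (h : P b < 1.073 * a + 1) :
    P N < 1.073 * N + 1 := by
  have h1 : P N ≤ P b := P_mono hb
  have h2 : (a:ℝ) ≤ (N:ℝ) := by exact_mod_cast ha
  have h3 : (1.073:ℝ) * a ≤ 1.073 * N := by linarith
  linarith

set_option maxHeartbeats 1000000 in
lemma P_base {N : ℕ} (hN : N ≤ 29) : P N < 1.073 * N + 1 := by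
  have hP0 := P_zero
  have hP1 : P 1 = P 0 + Λ 1 := P_succ 0
  rw [Lam1] at hP1
  have hP2 : P 2 = P 1 + Λ 2 := P_succ 1
  rw [Lam2] at hP2
  have hP3 : P 3 = P 2 + Λ 3 := P_succ 2
  rw [Lam3] at hP3
  have hP4 : P 4 = P 3 + Λ 4 := P_succ 3
  rw [Lam4] at hP4
  have hP5 : P 5 = P 4 + Λ 5 := P_succ 4
  rw [Lam5] at hP5
  have hP6 : P 6 = P 5 + Λ 6 := P_succ 5
  rw [Lam6] at hP6
  have hP7 : P 7 = P 6 + Λ 7 := P_succ 6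
  rw [Lam7] at hP7
  have hP8 : P 8 = P 7 + Λ 8 := P_succ 7
  rw [Lam8] at hP8
  have hP9 : P 9 = P 8 + Λ 9 := P_succ 8
  rw [Lam9] at hP9
  have hP10 : P 10 = P 9 + Λ 10 := P_succ 9
  rw [Lam10] at hP10
  have hP11 : P 11 = P 10 + Λ 11 := P_succ 10
  rw [Lam11] at hP11
  have hP12 : P 12 = P 11 + Λ 12 := P_succ 11
  rw [Lam12] at hP12
  have hP13 : P 13 = P 12 + Λ 13 := P_succ 12
  rw [Lam13] at hP13
  have hP14 : P 14 = P 13 + Λ 14 := P_succ 13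
  rw [Lam14] at hP14
  have hP15 : P 15 = P 14 + Λ 15 := P_succ 14
  rw [Lam15] at hP15
  have hP16 : P 16 = P 15 + Λ 16 := P_succ 15
  rw [Lam16] at hP16
  have hP17 : P 17 = P 16 + Λ 17 := P_succ 16
  rw [Lam17] at hP17
  have hP18 : P 18 = P 17 + Λ 18 := P_succ 17
  rw [Lam18] at hP18
  have hP19 : P 19 = P 18 + Λ 19 := P_succ 18
  rw [Lam19] at hP19
  have hP20 : P 20 = P 19 + Λ 20 := P_succ 19
  rw [Lam20] at hP20
  have hP21 : P 21 = P 20 + Λ 21 := P_succ 20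
  rw [Lam21] at hP21
  have hP22 : P 22 = P 21 + Λ 22 := P_succ 21
  rw [Lam22] at hP22
  have hP23 : P 23 = P 22 + Λ 23 := P_succ 22
  rw [Lam23] at hP23
  have hP24 : P 24 = P 23 + Λ 24 := P_succ 23
  rw [Lam24] at hP24
  have hP25 : P 25 = P 24 + Λ 25 := P_succ 24
  rw [Lam25] at hP25
  have hP26 : P 26 = P 25 + Λ 26 := P_succ 25
  rw [Lam26] at hP26
  have hP27 : P 27 = P 26 + Λ 27 := P_succ 26
  rw [Lam27] at hP27
  have hP28 : P 28 = P 27 + Λ 28 := P_succ 27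
  rw [Lam28] at hP28
  have hP29 : P 29 = P 28 + Λ 29 := P_succ 28
  rw [Lam29] at hP29
  have hlog_two_lb := log_two_lb
  have hlog_two_ub := log_two_ub
  have hlog3_lb := log3_lb
  have hlog5_lb := log5_lb
  have hlog3_ub := log3_ub
  have hlog5_ub := log5_ub
  have hlog7_ub := log7_ub
  have hlog11_ub := log11_ub
  have hlog13_ub := log13_ub
  have hlog17_ub := log17_ub
  have hlog19_ub := log19_ub
  have hlog23_ub := log23_ub
  have hlog29_ub := log29_ub
  rcases le_or_gt N 1 with h1 | h1
  · exact P_squeeze (a:=0) (show 0 ≤ N by omega) h1 (by push_cast; linarith)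
  rcases le_or_gt N 3 with h3 | h3
  · exact P_squeeze (a:=2) (show 2 ≤ N by omega) h3 (by push_cast; linarith)
  rcases le_or_gt N 4 with h4 | h4
  · exact P_squeeze (a:=4) (show 4 ≤ N by omega) h4 (by push_cast; linarith)
  rcases le_or_gt N 6 with h6 | h6
  · exact P_squeeze (a:=5) (show 5 ≤ N by omega) h6 (by push_cast; linarith)
  rcases le_or_gt N 8 with h8 | h8
  · exact P_squeeze (a:=7) (show 7 ≤ N by omega) h8 (by push_cast; linarith)
  rcases le_or_gt N 10 with h10 | h10
  · exact P_squeeze (a:=9) (show 9 ≤ N by omega) h10 (by push_cast; linarith)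
  rcases le_or_gt N 12 with h12 | h12
  · exact P_squeeze (a:=11) (show 11 ≤ N by omega) h12 (by push_cast; linarith)
  rcases le_or_gt N 16 with h16 | h16
  · exact P_squeeze (a:=13) (show 13 ≤ N by omega) h16 (by push_cast; linarith)
  rcases le_or_gt N 18 with h18 | h18
  · exact P_squeeze (a:=17) (show 17 ≤ N by omega) h18 (by push_cast; linarith)
  rcases le_or_gt N 22 with h22 | h22
  · exact P_squeeze (a:=19) (show 19 ≤ N by omega) h22 (by push_cast; linarith)
  rcases le_or_gt N 26 with h26 | h26
  · exact P_squeeze (a:=23) (show 23 ≤ N by omega) h26 (by push_cast; linarith)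
  exact P_squeeze (a:=27) (show 27 ≤ N by omega) (show N ≤ 29 by omega) (by push_cast; linarith)

lemma Econst_le : (2 + (1/2) * (Real.log (15/14) + Real.log (10/9) + Real.log (6/5))
    - (Real.log 2 + Real.log 3 + Real.log 5) : ℝ) ≤ 0 := by
  have h1 : Real.log (15/14 : ℝ) ≤ 15/14 - 1 := Real.log_le_sub_one_of_pos (by norm_num)
  have h2 : Real.log (10/9 : ℝ) ≤ 10/9 - 1 := Real.log_le_sub_one_of_pos (by norm_num)
  have h3 : Real.log (6/5 : ℝ) ≤ 6/5 - 1 := Real.log_le_sub_one_of_pos (by norm_num)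
  have := log_two_lb
  have := log3_lb
  have := log5_lb
  linarith

lemma E_le' (N : ℕ) (hN : 30 ≤ N) : E N ≤ c1 * N + (5/2) * Real.log N :=
  le_trans (E_le N hN) (by linarith [Econst_le])

lemma c1_lb : (0.8945:ℝ) ≤ c1 := by
  have := log_two_lb
  have := log3_lb
  have := log5_lb
  unfold c1
  linarith

/-- The target bound as a function. -/
noncomputable def B (y : ℝ) : ℝ :=
  (6/5) * c1 * y + (5 / (4 * Real.log 6)) * (Real.log y) ^ 2 + (5/4) * Real.log y + 1

lemma log6_pos : (0:ℝ) < Real.log 6 := Real.log_pos (by norm_num)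

lemma B_mono {a b : ℝ} (ha : 1 ≤ a) (hab : a ≤ b) : B a ≤ B b := by
  unfold B
  have hla : (0:ℝ) ≤ Real.log a := Real.log_nonneg ha
  have hll : Real.log a ≤ Real.log b := Real.log_le_log (by linarith) hab
  have hc := c1_lb
  have hq : (0:ℝ) ≤ 5 / (4 * Real.log 6) := by positivity
  have hsq : (Real.log a)^2 ≤ (Real.log b)^2 := by nlinarith
  have h1 : (6/5) * c1 * a ≤ (6/5) * c1 * b := by nlinarith
  nlinarith

lemma B_ge (y : ℝ) (hy : 1 ≤ y ∨ y = 0) : (6/5) * c1 * y + 1 ≤ B y := by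
  unfold B
  have hq : (0:ℝ) ≤ 5 / (4 * Real.log 6) := by positivity
  rcases hy with hy | rfl
  · have hla : (0:ℝ) ≤ Real.log y := Real.log_nonneg hy
    nlinarith
  · simp

set_option maxHeartbeats 1000000 in
lemma P_lt_B (N : ℕ) : P N < B N := by
  induction N using Nat.strong_induction_on with
  | _ N ih =>
    rcases le_or_gt N 29 with h29 | h29
    · -- base case
      have hb := P_base h29
      have hc := c1_lb
      have hB : (6/5) * c1 * N + 1 ≤ B N := by
        apply B_ge
        rcases Nat.eq_zero_or_pos N with rfl | h
        · right; simp
        · left; exact_mod_cast h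
      have hN0 : (0:ℝ) ≤ (N:ℝ) := Nat.cast_nonneg N
      have hmul := mul_le_mul_of_nonneg_right hc hN0
      linarith
    · -- inductive step
      have hN : 30 ≤ N := by omega
      have hdiv : N / 6 < N := Nat.div_lt_self (by omega) (by norm_num)
      have hih := ih (N/6) hdiv
      have hstep : P N ≤ P (N/6) + (c1 * N + (5/2) * Real.log N) := by
        have h1 := psi_sub_le_E N
        have h2 := E_le' N hN
        linarith
      -- B (N/6 : ℕ) ≤ B ((N:ℝ)/6)
      obtain ⟨h6l, h6u⟩ := div_cast_bounds N 6 (by norm_num)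
      have ha1 : (1:ℝ) ≤ ((N/6 : ℕ):ℝ) := by
        have : (1:ℕ) ≤ N/6 := by omega
        exact_mod_cast this
      have hBm : B ((N/6 : ℕ):ℝ) ≤ B ((N:ℝ)/6) := B_mono ha1 h6u
      -- key algebra : B (x/6) + c1*x + (5/2) log x ≤ B x for x ≥ 30
      have hx : (30:ℝ) ≤ (N:ℝ) := by exact_mod_cast hN
      have hkey : B ((N:ℝ)/6) + c1 * N + (5/2) * Real.log N ≤ B (N:ℝ) := by
        unfold B
        have hx0 : (0:ℝ) < (N:ℝ) := by linarith
        have hlog6 : Real.log ((N:ℝ)/6) = Real.log N - Real.log 6 :=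
          Real.log_div hx0.ne' (by norm_num)
        rw [hlog6]
        set L := Real.log (N:ℝ)
        set l := Real.log (6:ℝ)
        have hl : l ≠ 0 := log6_pos.ne'
        have hq : (5 / (4 * l)) * l = 5/4 := by field_simp
        have expand : (5 / (4 * l)) * (L - l)^2 + (5/4) * (L - l) + (5/2) * L
            = (5 / (4 * l)) * L^2 + (5/4) * L := by
          linear_combination (l - 2*L) * hq
        nlinarith [expand]
      calc P N ≤ P (N/6) + (c1 * N + (5/2) * Real.log N) := hstep
        _ < B ((N/6 : ℕ):ℝ) + (c1 * N + (5/2) * Real.log N) := by linarith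
        _ ≤ B ((N:ℝ)/6) + (c1 * N + (5/2) * Real.log N) := by linarith
        _ ≤ B (N:ℝ) := by linarith

lemma chebyshevC₁_eq : chebyshevC₁ = c1 := by
  unfold chebyshevC₁
  rw [Real.log_mul (by positivity) (by positivity),
    Real.log_mul (by positivity) (by positivity),
    Real.log_mul (by positivity) (by positivity),
    Real.log_rpow (by norm_num), Real.log_rpow (by norm_num),
    Real.log_rpow (by norm_num), Real.log_rpow (by norm_num), log30]
  unfold c1
  ring

lemma chebyshevPsi_eq (x : ℝ) : chebyshevPsi x = P ⌊x⌋₊ := by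
  unfold chebyshevPsi P
  have h : Finset.Iic ⌊x⌋₊ = insert 0 (Finset.Ioc 0 ⌊x⌋₊) := by
    ext n
    simp only [Finset.mem_Iic, Finset.mem_insert, Finset.mem_Ioc]
    omega
  rw [h, Finset.sum_insert (by simp)]
  simp


theorem chebyshevPsi_upper_bound (x : ℝ) (hx : 30 ≤ x) :
    chebyshevPsi x < (6/5) * chebyshevC₁ * x
      + (5 / (4 * Real.log 6)) * (Real.log x) ^ 2 + (5/4) * Real.log x + 1 := by
  have hx0 : (0:ℝ) ≤ x := by linarith
  have hN : 30 ≤ ⌊x⌋₊ := Nat.le_floor (by exact_mod_cast hx)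
  have h1 : P ⌊x⌋₊ < B ⌊x⌋₊ := P_lt_B _
  have hfl : ((⌊x⌋₊ : ℕ):ℝ) ≤ x := Nat.floor_le hx0
  have h1' : (1:ℝ) ≤ ((⌊x⌋₊ : ℕ):ℝ) := by
    have : (1:ℕ) ≤ ⌊x⌋₊ := by omega
    exact_mod_cast this
  have h2 : B ((⌊x⌋₊ : ℕ):ℝ) ≤ B x := B_mono h1' hfl
  rw [chebyshevPsi_eq, chebyshevC₁_eq]
  exact lt_of_lt_of_le h1 h2
end

section
/- Let c₁ = log(2^{1/2}·3^{1/3}·5^{1/5}·30^{-1/30}) be Chebyshev's constant. For every real number x ≥ 30, the Chebyshev function satisfies ψ(x) > c₁·x − (5/2)·log(x) − 1. -/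
open Real Nat Finset intervalIntegral

noncomputable def Phi (y : ℝ) : ℝ := y * Real.log y - y

lemma K1 {u v : ℝ} (hu : 0 < u) (huv : u ≤ v) : Phi v - Phi u ≤ (v - u) * Real.log v := by
  have hv : 0 < v := lt_of_lt_of_le hu huv
  have h := Real.log_le_sub_one_of_pos (show 0 < v/u by positivity)
  rw [Real.log_div hv.ne' hu.ne'] at h
  unfold Phi
  have h3 : u * (v/u) = v := by field_simp
  nlinarith [mul_le_mul_of_nonneg_left h hu.le]

lemma K2 {u v : ℝ} (hu : 0 < u) (huv : u ≤ v) : (v - u) * Real.log u ≤ Phi v - Phi u := by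
  have hv : 0 < v := lt_of_lt_of_le hu huv
  have h := Real.log_le_sub_one_of_pos (show 0 < u/v by positivity)
  rw [Real.log_div hu.ne' hv.ne'] at h
  unfold Phi
  have h3 : v * (u/v) = u := by field_simp
  nlinarith [mul_le_mul_of_nonneg_left h hv.le]

lemma linInt (c d u v : ℝ) : ∫ t in u..v, (c + t * d) = (v - u) * c + (v^2 - u^2)/2 * d := by
  rw [integral_add intervalIntegrable_const ((intervalIntegral.intervalIntegrable_id).mul_const d)]
  rw [integral_const, integral_mul_const, integral_id]
  simp only [smul_eq_mul]
  try ring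

lemma logInt {u v : ℝ} (hu : 0 < u) (hv : 0 < v) : ∫ t in u..v, Real.log t = Phi v - Phi u := by
  rw [integral_log]; unfold Phi; ring

lemma log_intble {u v : ℝ} (hu : 0 < u) (huv : u ≤ v) :
    IntervalIntegrable Real.log MeasureTheory.volume u v := by
  apply ContinuousOn.intervalIntegrable
  apply Real.continuousOn_log.mono
  intro t ht
  rw [Set.uIcc_of_le huv] at ht
  exact ne_of_gt (lt_of_lt_of_le hu ht.1)

lemma midpoint_step {a : ℝ} (ha : 3/2 ≤ a) : Phi (a + 1/2) - Phi (a - 1/2) ≤ Real.log a := by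
  have h1 : (0:ℝ) < a - 1/2 := by linarith
  have h2 : (0:ℝ) < a + 1/2 := by linarith
  have ha0 : (0:ℝ) < a := by linarith
  rw [← logInt h1 h2]
  have key : ∫ t in (a - 1/2)..(a + 1/2), Real.log t
      ≤ ∫ t in (a - 1/2)..(a + 1/2), ((Real.log a - 1) + t * (1/a)) := by
    apply integral_mono_on (by linarith) (log_intble h1 (by linarith))
    · exact (continuous_const.add (continuous_id.mul continuous_const)).intervalIntegrable _ _
    · intro t ht
      have ht1 : 0 < t := lt_of_lt_of_le h1 ht.1
      have h := Real.log_le_sub_one_of_pos (show 0 < t/a by positivity)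
      rw [Real.log_div ht1.ne' ha0.ne'] at h
      have : t/a = t * (1/a) := by ring
      linarith [this ▸ h]
  calc ∫ t in (a - 1/2)..(a + 1/2), Real.log t ≤ _ := key
    _ = Real.log a := by
        rw [linInt]
        field_simp
        ring

lemma chord_step {a : ℝ} (ha : 1 ≤ a) :
    (Real.log a + Real.log (a+1))/2 ≤ Phi (a+1) - Phi a := by
  have ha0 : (0:ℝ) < a := by linarith
  have ha1 : (0:ℝ) < a + 1 := by linarith
  rw [← logInt ha0 ha1]
  have key : ∫ t in a..(a+1), (((a+1) * Real.log a - a * Real.log (a+1)) + t * (Real.log (a+1) - Real.log a))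
      ≤ ∫ t in a..(a+1), Real.log t := by
    apply integral_mono_on (by linarith)
    · exact (continuous_const.add (continuous_id.mul continuous_const)).intervalIntegrable _ _
    · exact log_intble ha0 (by linarith)
    · intro t ht
      have hc := strictConcaveOn_log_Ioi.concaveOn.2 (Set.mem_Ioi.2 ha0) (Set.mem_Ioi.2 ha1)
        (show (0:ℝ) ≤ a + 1 - t by linarith [ht.2]) (show (0:ℝ) ≤ t - a by linarith [ht.1])
        (by ring)
      simp only [smul_eq_mul] at hc
      have : (a + 1 - t) * a + (t - a) * (a + 1) = t := by ring
      rw [this] at hc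
      nlinarith [hc]
  calc ((Real.log a + Real.log (a+1))/2)
      = ∫ t in a..(a+1), (((a+1) * Real.log a - a * Real.log (a+1)) + t * (Real.log (a+1) - Real.log a)) := by
        rw [linInt]; ring
    _ ≤ _ := key

lemma stirling_lower : ∀ N : ℕ, 1 ≤ N → Phi (N + 1/2) - Phi (3/2) ≤ Real.log (N !) := by
  intro N hN
  induction N, hN using Nat.le_induction with
  | base => simp [Phi]; norm_num
  | succ n hn ih =>
    have h2 : (3:ℝ)/2 ≤ (n:ℝ) + 1 := by
      have : (1:ℝ) ≤ (n:ℝ) := by exact_mod_cast hn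
      linarith
    have hm := midpoint_step h2
    have hfac : ((n+1)! : ℝ) = ((n+1):ℕ) * (n ! : ℝ) := by
      rw [Nat.factorial_succ]; push_cast; ring
    have hlog : Real.log ((n+1)!) = Real.log ((n:ℝ)+1) + Real.log (n !) := by
      rw [hfac]; rw [Real.log_mul (by positivity) (by exact_mod_cast (Nat.factorial_pos n).ne')]
      norm_num
    have e1 : ((n:ℝ) + 1 - 1/2) = (n:ℝ) + 1/2 := by ring
    have e2 : ((n:ℝ) + 1 + 1/2) = ((n:ℝ)+1) + 1/2 := by ring
    rw [e1] at hm
    push_cast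
    push_cast at hlog ih hm
    linarith

lemma stirling_upper : ∀ N : ℕ, 1 ≤ N → Real.log (N !) ≤ Phi N + (1/2) * Real.log N + 1 := by
  intro N hN
  induction N, hN using Nat.le_induction with
  | base => simp [Phi]
  | succ n hn ih =>
    have h1 : (1:ℝ) ≤ (n:ℝ) := by exact_mod_cast hn
    have hc := chord_step h1
    have hfac : ((n+1)! : ℝ) = ((n+1):ℕ) * (n ! : ℝ) := by
      rw [Nat.factorial_succ]; push_cast; ring
    have hlog : Real.log ((n+1)!) = Real.log ((n:ℝ)+1) + Real.log (n !) := by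
      rw [hfac]; rw [Real.log_mul (by positivity) (by exact_mod_cast (Nat.factorial_pos n).ne')]
      norm_num
    push_cast
    push_cast at hlog ih hc
    have hl2 : Real.log ((n:ℝ)+1) = 2 * ((Real.log n + Real.log ((n:ℝ)+1))/2) - Real.log n := by ring
    linarith

/-- T lower bound: for y ≥ 1, Φ(y) - (1/2) log y ≤ log ⌊y⌋! -/
lemma T_lower {y : ℝ} (hy : 1 ≤ y) :
    Phi y - (1/2) * Real.log y ≤ Real.log ((⌊y⌋₊)!) := by
  set N := ⌊y⌋₊ with hNdef
  have hN1 : 1 ≤ N := Nat.le_floor (by exact_mod_cast hy)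
  have hNy : (N:ℝ) ≤ y := Nat.floor_le (by linarith)
  have hyN : y < (N:ℝ) + 1 := Nat.lt_floor_add_one y
  have hN1' : (1:ℝ) ≤ (N:ℝ) := by exact_mod_cast hN1
  have hsl := stirling_lower N hN1
  have hPhi32 : Phi (3/2) ≤ 0 := by
    have := Real.log_le_sub_one_of_pos (show (0:ℝ) < 3/2 by norm_num)
    unfold Phi; nlinarith
  have key : Phi y - (1/2) * Real.log y ≤ Phi ((N:ℝ) + 1/2) := by
    rcases le_or_gt y ((N:ℝ) + 1/2) with h | h
    · have hmono : Phi y ≤ Phi ((N:ℝ) + 1/2) := by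
        have := K2 (show (0:ℝ) < y by linarith) h
        have hly : 0 ≤ Real.log y := Real.log_nonneg hy
        nlinarith
      have hly : 0 ≤ Real.log y := Real.log_nonneg hy
      linarith
    · have := K1 (show (0:ℝ) < (N:ℝ) + 1/2 by linarith) h.le
      have hly : 0 ≤ Real.log y := Real.log_nonneg hy
      nlinarith
  linarith

/-- T upper bound: for y ≥ 1, log ⌊y⌋! ≤ Φ(y) + (1/2) log y + 1 -/
lemma T_upper {y : ℝ} (hy : 1 ≤ y) :
    Real.log ((⌊y⌋₊)!) ≤ Phi y + (1/2) * Real.log y + 1 := by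
  set N := ⌊y⌋₊ with hNdef
  have hN1 : 1 ≤ N := Nat.le_floor (by exact_mod_cast hy)
  have hNy : (N:ℝ) ≤ y := Nat.floor_le (by linarith)
  have hN1' : (1:ℝ) ≤ (N:ℝ) := by exact_mod_cast hN1
  have hsu := stirling_upper N hN1
  have hmono : Phi (N:ℝ) ≤ Phi y := by
    have := K2 (show (0:ℝ) < (N:ℝ) by linarith) hNy
    have : 0 ≤ ((y:ℝ) - N) * Real.log N := by
      apply mul_nonneg (by linarith) (Real.log_nonneg hN1')
    linarith [K2 (show (0:ℝ) < (N:ℝ) by linarith) hNy]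
  have hlm : Real.log (N:ℝ) ≤ Real.log y := Real.log_le_log (by linarith) hNy
  linarith


lemma log_factorial_eq (N : ℕ) :
    Real.log (N !) = ∑ d ∈ Finset.Icc 1 N, ArithmeticFunction.vonMangoldt d * (N / d : ℕ) := by
  have h1 : Real.log (N !) = ∑ m ∈ Finset.Icc 1 N, Real.log m := by
    rw [← Real.log_prod (fun m hm => by
      have := (Finset.mem_Icc.1 hm).1; positivity)]
    congr 1
    rw [← Nat.cast_prod]
    congr 1
    rw [← Finset.Ico_add_one_right_eq_Icc]
    exact (Finset.prod_Ico_id_eq_factorial N).symm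
  rw [h1]
  have h2 : ∀ m ∈ Finset.Icc 1 N, Real.log m
      = ∑ d ∈ Finset.Icc 1 N, if d ∣ m then ArithmeticFunction.vonMangoldt d else 0 := by
    intro m hm
    rw [Finset.mem_Icc] at hm
    rw [← ArithmeticFunction.vonMangoldt_sum]
    rw [← Finset.sum_filter]
    apply Finset.sum_congr _ (fun _ _ => rfl)
    ext d
    simp only [Nat.mem_divisors, Finset.mem_filter, Finset.mem_Icc]
    constructor
    · rintro ⟨hd, hm0⟩
      exact ⟨⟨Nat.one_le_iff_ne_zero.2 (by rintro rfl; simp at hd; omega),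
        le_trans (Nat.le_of_dvd (by omega) hd) hm.2⟩, hd⟩
    · rintro ⟨⟨h1, h2⟩, hd⟩
      exact ⟨hd, by omega⟩
  rw [Finset.sum_congr rfl h2, Finset.sum_comm]
  apply Finset.sum_congr rfl
  intro d hd
  rw [← Finset.sum_filter, Finset.sum_const, nsmul_eq_mul, mul_comm]
  congr 1
  have : Finset.Icc 1 N = Finset.Ioc 0 N := by
    ext a; simp [Finset.mem_Icc, Finset.mem_Ioc]; omega
  rw [this]
  rw [Nat.Ioc_filter_dvd_card_eq_div]


lemma sum_ext (M k : ℕ) :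
    Real.log ((M / k)!) = ∑ d ∈ Finset.Icc 1 M,
      ArithmeticFunction.vonMangoldt d * ((M / d) / k : ℕ) := by
  rw [log_factorial_eq]
  rw [Finset.sum_subset (Finset.Icc_subset_Icc_right (Nat.div_le_self M k))
    (fun d hd hnd => by
      simp only [Finset.mem_Icc, not_and, not_le] at hd hnd
      have h0 : M / k / d = 0 := Nat.div_eq_of_lt (hnd hd.1)
      rw [h0]; simp)]
  apply Finset.sum_congr rfl
  intro d hd
  congr 2
  rw [Nat.div_div_eq_div_mul, Nat.div_div_eq_div_mul, Nat.mul_comm]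

theorem chebyshevPsi_lower_bound (x : ℝ) (hx : 30 ≤ x) :
    chebyshevPsi x > chebyshevC₁ * x - (5/2) * Real.log x - 1 := by
  have hx0 : (0:ℝ) < x := by linarith
  set M := ⌊x⌋₊ with hM
  have hf2 : ⌊x / (2:ℝ)⌋₊ = M / 2 := by
    have := Nat.floor_div_natCast x 2; rw [hM]; exact_mod_cast this
  have hf3 : ⌊x / (3:ℝ)⌋₊ = M / 3 := by
    have := Nat.floor_div_natCast x 3; rw [hM]; exact_mod_cast this
  have hf5 : ⌊x / (5:ℝ)⌋₊ = M / 5 := by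
    have := Nat.floor_div_natCast x 5; rw [hM]; exact_mod_cast this
  have hf30 : ⌊x / (30:ℝ)⌋₊ = M / 30 := by
    have := Nat.floor_div_natCast x 30; rw [hM]; exact_mod_cast this
  have hU : Real.log (M !) - Real.log ((M/2)!) - Real.log ((M/3)!)
      - Real.log ((M/5)!) + Real.log ((M/30)!) ≤ chebyshevPsi x := by
    rw [log_factorial_eq M, sum_ext M 2, sum_ext M 3, sum_ext M 5, sum_ext M 30]
    rw [← Finset.sum_sub_distrib, ← Finset.sum_sub_distrib, ← Finset.sum_sub_distrib,
      ← Finset.sum_add_distrib]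
    have hψ : chebyshevPsi x = ∑ d ∈ Finset.Icc 1 M, ArithmeticFunction.vonMangoldt d := by
      unfold chebyshevPsi
      rw [← hM]
      refine (Finset.sum_subset (fun d hd => ?_) (fun d hd hnd => ?_)).symm
      · simp only [Finset.mem_Icc, Finset.mem_Iic] at *; omega
      · simp only [Finset.mem_Icc, Finset.mem_Iic, not_and, not_le] at hd hnd
        have hd0 : d = 0 := by omega
        simp [hd0]
    rw [hψ]
    apply Finset.sum_le_sum
    intro d hd
    set m := M / d with hm
    have key : (m:ℝ) + ((m/30 : ℕ):ℝ) ≤ ((m/2:ℕ):ℝ) + ((m/3:ℕ):ℝ) + ((m/5:ℕ):ℝ) + 1 := by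
      have : m + m/30 ≤ m/2 + m/3 + m/5 + 1 := by omega
      exact_mod_cast this
    have hΛ : 0 ≤ ArithmeticFunction.vonMangoldt d := ArithmeticFunction.vonMangoldt_nonneg
    have hfact : ArithmeticFunction.vonMangoldt d * (m:ℝ)
        - ArithmeticFunction.vonMangoldt d * ((m/2:ℕ):ℝ)
        - ArithmeticFunction.vonMangoldt d * ((m/3:ℕ):ℝ)
        - ArithmeticFunction.vonMangoldt d * ((m/5:ℕ):ℝ)
        + ArithmeticFunction.vonMangoldt d * ((m/30:ℕ):ℝ)
        = ArithmeticFunction.vonMangoldt d *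
          ((m:ℝ) - ((m/2:ℕ):ℝ) - ((m/3:ℕ):ℝ) - ((m/5:ℕ):ℝ) + ((m/30:ℕ):ℝ)) := by ring
    rw [hfact]
    calc ArithmeticFunction.vonMangoldt d *
          ((m:ℝ) - ((m/2:ℕ):ℝ) - ((m/3:ℕ):ℝ) - ((m/5:ℕ):ℝ) + ((m/30:ℕ):ℝ))
        ≤ ArithmeticFunction.vonMangoldt d * 1 :=
          mul_le_mul_of_nonneg_left (by linarith) hΛ
      _ = ArithmeticFunction.vonMangoldt d := mul_one _
  have h1 : (1:ℝ) ≤ x := by linarith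
  have h2 : (1:ℝ) ≤ x/2 := by linarith
  have h3 : (1:ℝ) ≤ x/3 := by linarith
  have h5 : (1:ℝ) ≤ x/5 := by linarith
  have h30 : (1:ℝ) ≤ x/30 := by linarith
  have hTx := T_lower h1
  have hT30 := T_lower h30
  have hT2 := T_upper h2
  have hT3 := T_upper h3
  have hT5 := T_upper h5
  rw [← hM] at hTx
  rw [hf2] at hT2
  rw [hf3] at hT3
  rw [hf5] at hT5
  rw [hf30] at hT30
  have hc1 : chebyshevC₁ = (1/2)*Real.log 2 + (1/3)*Real.log 3 + (1/5)*Real.log 5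
      - (1/30)*Real.log 30 := by
    unfold chebyshevC₁
    rw [Real.log_mul (by positivity) (by positivity),
      Real.log_mul (by positivity) (by positivity),
      Real.log_mul (by positivity) (by positivity),
      Real.log_rpow (by norm_num), Real.log_rpow (by norm_num),
      Real.log_rpow (by norm_num), Real.log_rpow (by norm_num)]
    ring
  have l2 : Real.log (x/2) = Real.log x - Real.log 2 := Real.log_div hx0.ne' (by norm_num)
  have l3 : Real.log (x/3) = Real.log x - Real.log 3 := Real.log_div hx0.ne' (by norm_num)
  have l5 : Real.log (x/5) = Real.log x - Real.log 5 := Real.log_div hx0.ne' (by norm_num)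
  have l30 : Real.log (x/30) = Real.log x - Real.log 30 := Real.log_div hx0.ne' (by norm_num)
  have h30' : Real.log 30 = Real.log 2 + Real.log 3 + Real.log 5 := by
    rw [show (30:ℝ) = 2*3*5 by norm_num, Real.log_mul (by norm_num) (by norm_num),
      Real.log_mul (by norm_num) (by norm_num)]
  have hl30 : 2 < Real.log 30 := by
    rw [← Real.exp_lt_exp, Real.exp_log (by norm_num)]
    have h := Real.exp_one_lt_d9
    have he : Real.exp 2 = Real.exp 1 * Real.exp 1 := by
      rw [← Real.exp_add]; norm_num
    nlinarith [Real.exp_pos 1]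
  have keyIneq : (Phi x - (1/2)*Real.log x) - (Phi (x/2) + (1/2)*Real.log (x/2) + 1)
      - (Phi (x/3) + (1/2)*Real.log (x/3) + 1) - (Phi (x/5) + (1/2)*Real.log (x/5) + 1)
      + (Phi (x/30) - (1/2)*Real.log (x/30))
      = chebyshevC₁ * x - (5/2)*Real.log x
        + (1/2)*(Real.log 2 + Real.log 3 + Real.log 5 + Real.log 30) - 3 := by
    rw [hc1, l2, l3, l5, l30]
    unfold Phi
    rw [l2, l3, l5, l30]
    ring
  linarith [hU, hTx, hT2, hT3, hT5, hT30, keyIneq, hl30, h30']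
end

section
/- For every real number x ≥ 2846396, one has (x/log(x))·(1 + 1/log(x) + 2.51/(log(x))²) ≤ x/(log(x) − 1.08366). -/
open Finset in
lemma log_big_lower : (14.86156405 : ℝ) ≤ Real.log 2846396 := by
  have h2 := Real.log_two_gt_d9
  set y : ℝ := -(187311/524288) with hy
  have hab : |y| = 187311/524288 := by rw [hy, abs_neg, abs_of_nonneg]; norm_num
  have h1 : |y| < 1 := by rw [hab]; norm_num
  have h := Real.abs_log_sub_add_sum_range_le h1 18
  have hu : (1 : ℝ) - y = 711599/524288 := by rw [hy]; norm_num
  rw [hu, hab] at h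
  have hlogu : -(187311/524288:ℝ)^19 / (1 - 187311/524288)
      - ∑ i ∈ range 18, y ^ (i + 1) / (i + 1) ≤ Real.log (711599/524288) := by
    have := abs_le.1 h
    linarith [this.1]
  have hsum : ∑ i ∈ range 18, y ^ (i + 1) / (i + 1)
      = ∑ i ∈ range 18, (-(187311/524288:ℝ)) ^ (i + 1) / (i + 1) := by rw [hy]
  rw [hsum] at hlogu
  have heval : Real.log 2846396 = 21 * Real.log 2 + Real.log (711599/524288) := by
    have : (2846396 : ℝ) = 2 ^ 21 * (711599/524288) := by norm_num
    rw [this, Real.log_mul (by positivity) (by norm_num), Real.log_pow]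
    push_cast; ring
  rw [heval]
  have hsum_eval : -(187311/524288:ℝ)^19 / (1 - 187311/524288)
      - ∑ i ∈ range 18, (-(187311/524288:ℝ)) ^ (i + 1) / (i + 1)
      ≥ 14.86156405 - 21 * 0.6931471803 := by
    simp only [Finset.sum_range_succ, Finset.sum_range_zero]
    norm_num
  nlinarith [hlogu, h2]

theorem dusart_bound_le_legendre_bound (x : ℝ) (hx : 2846396 ≤ x) :
    x / Real.log x * (1 + 1 / Real.log x + 2.51 / (Real.log x) ^ 2)
      ≤ x / (Real.log x - 1.08366) := by
  have hx0 : (0:ℝ) < x := by linarith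
  have hL : (14.86156405 : ℝ) ≤ Real.log x := by
    calc (14.86156405 : ℝ) ≤ Real.log 2846396 := log_big_lower
    _ ≤ Real.log x := Real.log_le_log (by norm_num) hx
  set L := Real.log x with hLdef
  have hL0 : (0:ℝ) < L := by linarith
  have hL1 : (0:ℝ) < L - 1.08366 := by linarith
  have key : (L^2 + L + 2.51) * (L - 1.08366) ≤ L^3 := by nlinarith [sq_nonneg (L - 14.86156405)]
  have lhs_eq : x / L * (1 + 1 / L + 2.51 / L ^ 2) = x * (L^2 + L + 2.51) / L^3 := by
    field_simp
  rw [lhs_eq, div_le_div_iff₀ (by positivity) hL1]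
  nlinarith [mul_le_mul_of_nonneg_left key hx0.le]
end
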